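/- Under the spherical mixture model, E[X ⊗ X] − σ̄²·I = Σ_{k=1}^K w_k · μ_k ⊗ μ_k, where σ̄² is the smallest eigenvalue of Cov(X). -/

import Mathlib

open MeasureTheory

lemma comp_second_moment {M : ℕ} (ν : Measure (Fin M → ℝ)) [IsProbabilityMeasure ν]
    (μ : Fin M → ℝ) (i j : Fin M)
    (h1 : ∀ i, Integrable (fun x => x i) ν)
    (h2 : Integrable (fun x => x i * x j) ν)
    (hm : ∀ i, ∫ x, x i ∂ν = μ i) :
    ∫ x, (x i - μ i) * (x j - μ j) ∂ν = (∫ x, x i * x j ∂ν) - μ i * μ j := by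
  have hA : Integrable (fun x : Fin M → ℝ => μ i * x j) ν := (h1 j).const_mul _
  have hB : Integrable (fun x : Fin M → ℝ => μ j * x i) ν := (h1 i).const_mul _
  have hf : Integrable (fun x : Fin M → ℝ => x i * x j - μ i * x j - μ j * x i) ν :=
    (h2.sub hA).sub hB
  have key : (fun x : Fin M → ℝ => (x i - μ i) * (x j - μ j)) =
      fun x => (x i * x j - μ i * x j - μ j * x i) + μ i * μ j := by
    funext x; ring
  have hfg : Integrable (fun x : Fin M → ℝ => x i * x j - μ i * x j) ν := h2.sub hA
  have e1 : ∫ x, ((x i * x j - μ i * x j - μ j * x i) + μ i * μ j) ∂ν =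
      (∫ x, (x i * x j - μ i * x j - μ j * x i) ∂ν) + ∫ _x, (μ i * μ j : ℝ) ∂ν :=
    integral_add hf (integrable_const _)
  have e2 : ∫ x, (x i * x j - μ i * x j - μ j * x i) ∂ν =
      (∫ x, (x i * x j - μ i * x j) ∂ν) - ∫ x, μ j * x i ∂ν := integral_sub hfg hB
  have e3 : ∫ x, (x i * x j - μ i * x j) ∂ν =
      (∫ x, x i * x j ∂ν) - ∫ x, μ i * x j ∂ν := integral_sub h2 hA
  rw [key, e1, e2, e3, integral_const_mul, integral_const_mul, hm i, hm j,
    integral_const, probReal_univ]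
  simp; ring

/-- Under the spherical mixture model `P = ∑ k, w k • ν k` (component means `μk k`,
within-component independent coordinates of common variance `σ2 k`), the second-moment
matrix satisfies `E[X ⊗ X] - σ̄² I = ∑ k, w k • (μk k ⊗ μk k)` entrywise, where
`σ̄² = ∑ k, w k σ2 k`. -/
theorem mixture_second_moment {M K : ℕ}
    (w : Fin K → ℝ) (hw : ∀ k, 0 ≤ w k) (hw1 : ∑ k, w k = 1)
    (μk : Fin K → Fin M → ℝ) (σ2 : Fin K → ℝ) (hσ2 : ∀ k, 0 ≤ σ2 k)
    (ν : Fin K → Measure (Fin M → ℝ)) (hprob : ∀ k, IsProbabilityMeasure (ν k))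
    (hint1 : ∀ k i, Integrable (fun x => x i) (ν k))
    (hint2 : ∀ k i j, Integrable (fun x => x i * x j) (ν k))
    (hmean : ∀ k i, ∫ x, x i ∂(ν k) = μk k i)
    (hcov : ∀ k i j, ∫ x, (x i - μk k i) * (x j - μk k j) ∂(ν k) =
      if i = j then σ2 k else 0)
    (P : Measure (Fin M → ℝ)) (hP : P = ∑ k, ENNReal.ofReal (w k) • ν k)
    (σbar2 : ℝ) (hσbar2 : σbar2 = ∑ k, w k * σ2 k) :
    ∀ i j, (∫ x, x i * x j ∂P) - (if i = j then σbar2 else 0) =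
      ∑ k, w k * (μk k i * μk k j) := by
  intro i j
  have hsecond : ∀ k, ∫ x, x i * x j ∂(ν k) =
      (if i = j then σ2 k else 0) + μk k i * μk k j := by
    intro k
    have := hprob k
    have := comp_second_moment (ν k) (μk k) i j (hint1 k) (hint2 k i j) (hmean k)
    rw [hcov k i j] at this
    linarith
  have hP' : ∫ x, x i * x j ∂P = ∑ k, w k * ∫ x, x i * x j ∂(ν k) := by
    rw [hP, integral_finset_sum_measure (fun k _ =>
      (hint2 k i j).smul_measure ENNReal.ofReal_ne_top)]
    refine Finset.sum_congr rfl fun k _ => ?_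
    rw [integral_smul_measure, ENNReal.toReal_ofReal (hw k)]
    rfl
  rw [hP', hσbar2]
  rcases eq_or_ne i j with h | h
  · subst h
    simp only [if_pos rfl, eq_self_iff_true, if_true] at hsecond ⊢
    have : ∑ k, w k * ∫ x, x i * x i ∂(ν k) =
        ∑ k, w k * σ2 k + ∑ k, w k * (μk k i * μk k i) := by
      rw [← Finset.sum_add_distrib]
      exact Finset.sum_congr rfl fun k _ => by rw [hsecond k]; ring
    rw [this]; ring
  · simp only [if_neg h] at hsecond ⊢
    simp [hsecond]
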